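/- There exists a constant C > 0 such that for every c ∈ (0, 1/2] the integrand t ↦ log(cosh t + √(sinh(t)² + c²)) − t is nonnegative on (0, ∞) and 0 ≤ ∫_0^∞ (log(cosh t + √(sinh(t)² + c²)) − t) dt ≤ C c² (1 + |log c|). (With c = cos η this is the estimate (5.14): ∫_0^∞ X_η(π/2, t) dt = O(η₁² ln η₁) as η → π/2, where η₁ = π/2 − η and X_η(π/2, t) = ln(cosh t + √(cosh² t − sin² η)) − t.) -/

import Mathlib

open MeasureTheory Real

-- pointwise lemmas
section pt
variable {c : ℝ} (hc : 0 < c)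

lemma arg_pos (c t : ℝ) : 0 < Real.cosh t + Real.sqrt ((Real.sinh t) ^ 2 + c ^ 2) := by
  have := Real.cosh_pos (x := t)
  have := Real.sqrt_nonneg ((Real.sinh t) ^ 2 + c ^ 2)
  linarith

lemma f_nonneg {t : ℝ} (ht : 0 ≤ t) :
    0 ≤ Real.log (Real.cosh t + Real.sqrt ((Real.sinh t) ^ 2 + c ^ 2)) - t := by
  have hs : Real.sinh t ≤ Real.sqrt ((Real.sinh t) ^ 2 + c ^ 2) :=
    Real.le_sqrt_of_sq_le (by nlinarith [sq_nonneg c])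
  have h2 : Real.exp t ≤ Real.cosh t + Real.sqrt ((Real.sinh t) ^ 2 + c ^ 2) := by
    rw [Real.cosh_eq, Real.sinh_eq] at *
    linarith
  have := Real.log_le_log (Real.exp_pos t) h2
  rw [Real.log_exp] at this
  linarith

lemma f_le_of_arg_le {t x : ℝ} (hx : 0 ≤ x)
    (h : Real.cosh t + Real.sqrt ((Real.sinh t) ^ 2 + c ^ 2) ≤ Real.exp t * (1 + x)) :
    Real.log (Real.cosh t + Real.sqrt ((Real.sinh t) ^ 2 + c ^ 2)) - t ≤ x := by
  have h1 : Real.log (Real.cosh t + Real.sqrt ((Real.sinh t) ^ 2 + c ^ 2)) ≤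
      Real.log (Real.exp t * (1 + x)) := Real.log_le_log (arg_pos c t) h
  rw [Real.log_mul (Real.exp_ne_zero t) (by linarith), Real.log_exp] at h1
  have h2 : Real.log (1 + x) ≤ x := by
    have := Real.log_le_sub_one_of_pos (x := 1 + x) (by linarith)
    linarith
  linarith

include hc in
lemma f_le_exp' {t : ℝ} (ht : 0 ≤ t) :
    Real.log (Real.cosh t + Real.sqrt ((Real.sinh t) ^ 2 + c ^ 2)) - t ≤ c * Real.exp (-t) := by
  apply f_le_of_arg_le (by positivity)
  have hs : Real.sqrt ((Real.sinh t) ^ 2 + c ^ 2) ≤ Real.sinh t + c := by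
    have hsn : 0 ≤ Real.sinh t := Real.sinh_nonneg_iff.2 ht
    calc Real.sqrt ((Real.sinh t) ^ 2 + c ^ 2) ≤ Real.sqrt ((Real.sinh t + c) ^ 2) :=
          Real.sqrt_le_sqrt (by nlinarith)
      _ = Real.sinh t + c := Real.sqrt_sq (by positivity)
  have h1 : Real.cosh t + Real.sinh t = Real.exp t := by
    rw [Real.cosh_eq, Real.sinh_eq]; ring
  have h2 : Real.exp t * (1 + c * Real.exp (-t)) = Real.exp t + c := by
    have hee : Real.exp t * Real.exp (-t) = 1 := by rw [← Real.exp_add]; simp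
    ring_nf
    nlinarith [hee]
  linarith

include hc in
lemma f_le_inv {t : ℝ} (ht : 0 < t) :
    Real.log (Real.cosh t + Real.sqrt ((Real.sinh t) ^ 2 + c ^ 2)) - t ≤
      c ^ 2 / (Real.exp (2 * t) - 1) := by
  have hden : 0 < Real.exp (2 * t) - 1 := by
    have : Real.exp 0 < Real.exp (2 * t) := Real.exp_lt_exp.2 (by linarith)
    simpa using this
  apply f_le_of_arg_le (by positivity)
  have hsn : 0 < Real.sinh t := Real.sinh_pos_iff.2 ht
  have hs : Real.sqrt ((Real.sinh t) ^ 2 + c ^ 2) ≤ Real.sinh t + c ^ 2 / (2 * Real.sinh t) := by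
    have key : (Real.sinh t) ^ 2 + c ^ 2 ≤ (Real.sinh t + c ^ 2 / (2 * Real.sinh t)) ^ 2 := by
      have h0 : Real.sinh t * (c ^ 2 / (2 * Real.sinh t)) = c ^ 2 / 2 := by
        field_simp
      have h1 : 0 ≤ (c ^ 2 / (2 * Real.sinh t)) ^ 2 := sq_nonneg _
      nlinarith
    calc Real.sqrt ((Real.sinh t) ^ 2 + c ^ 2)
        ≤ Real.sqrt ((Real.sinh t + c ^ 2 / (2 * Real.sinh t)) ^ 2) := Real.sqrt_le_sqrt key
      _ = Real.sinh t + c ^ 2 / (2 * Real.sinh t) := Real.sqrt_sq (by positivity)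
  have h1 : Real.cosh t + Real.sinh t = Real.exp t := by
    rw [Real.cosh_eq, Real.sinh_eq]; ring
  have h2 : Real.exp t * (1 + c ^ 2 / (Real.exp (2 * t) - 1)) =
      Real.exp t + c ^ 2 / (2 * Real.sinh t) := by
    have hee : Real.exp t * Real.exp (-t) = 1 := by rw [← Real.exp_add]; simp
    have he : Real.exp (2 * t) - 1 = Real.exp t * (2 * Real.sinh t) := by
      rw [Real.sinh_eq]
      have h2t : Real.exp (2 * t) = Real.exp t * Real.exp t := by
        rw [← Real.exp_add]; ring_nf
      rw [h2t]; nlinarith [hee]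
    rw [he]
    have hsn' : (2 : ℝ) * Real.sinh t ≠ 0 := by positivity
    have hexp : Real.exp t ≠ 0 := Real.exp_ne_zero t
    field_simp
  linarith

end pt

lemma f_cont (c : ℝ) :
    Continuous (fun t => Real.log (Real.cosh t + Real.sqrt ((Real.sinh t) ^ 2 + c ^ 2)) - t) := by
  have hg : Continuous (fun t => Real.cosh t + Real.sqrt ((Real.sinh t) ^ 2 + c ^ 2)) := by
    exact Real.continuous_cosh.add ((Real.continuous_sinh.pow 2).add continuous_const).sqrt
  exact (hg.log (fun t => (arg_pos c t).ne')).sub continuous_id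

lemma f_int {c : ℝ} (hc : 0 < c) :
    IntegrableOn
      (fun t => Real.log (Real.cosh t + Real.sqrt ((Real.sinh t) ^ 2 + c ^ 2)) - t)
      (Set.Ioi (0 : ℝ)) := by
  have hdom : IntegrableOn (fun t => c * Real.exp (-t)) (Set.Ioi (0 : ℝ)) := by
    have := (exp_neg_integrableOn_Ioi (0 : ℝ) (b := 1) one_pos).const_mul c
    simpa [IntegrableOn] using this
  apply Integrable.mono' hdom ((f_cont c).aestronglyMeasurable.restrict)
  rw [ae_restrict_iff' measurableSet_Ioi]
  filter_upwards with t ht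
  rw [Real.norm_eq_abs, abs_of_nonneg (f_nonneg (le_of_lt ht))]
  exact f_le_exp' hc (le_of_lt ht)

/-- Estimate (5.14): there is `C > 0` such that for every `c ∈ (0, 1/2]` the integrand
`t ↦ log(cosh t + √(sinh² t + c²)) − t` is nonnegative, integrable on `(0, ∞)`, and
`0 ≤ ∫_0^∞ (log(cosh t + √(sinh² t + c²)) − t) dt ≤ C c² (1 + |log c|)`. -/
theorem integral_log_cosh_estimate :
    ∃ C > (0 : ℝ), ∀ c : ℝ, c ∈ Set.Ioc (0 : ℝ) (1 / 2) →
      (∀ t ∈ Set.Ioi (0 : ℝ),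
        0 ≤ Real.log (Real.cosh t + Real.sqrt ((Real.sinh t) ^ 2 + c ^ 2)) - t) ∧
      IntegrableOn
        (fun t => Real.log (Real.cosh t + Real.sqrt ((Real.sinh t) ^ 2 + c ^ 2)) - t)
        (Set.Ioi (0 : ℝ)) ∧
      0 ≤ ∫ t in Set.Ioi (0 : ℝ),
            (Real.log (Real.cosh t + Real.sqrt ((Real.sinh t) ^ 2 + c ^ 2)) - t) ∧
      (∫ t in Set.Ioi (0 : ℝ),
            (Real.log (Real.cosh t + Real.sqrt ((Real.sinh t) ^ 2 + c ^ 2)) - t))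
        ≤ C * c ^ 2 * (1 + |Real.log c|) := by
  refine ⟨2, by norm_num, fun c hc => ?_⟩
  obtain ⟨hc0, hc2⟩ := hc
  set f : ℝ → ℝ := fun t => Real.log (Real.cosh t + Real.sqrt ((Real.sinh t) ^ 2 + c ^ 2)) - t
    with hf
  have hI : IntegrableOn f (Set.Ioi (0 : ℝ)) := f_int hc0
  have hfnn : ∀ t ∈ Set.Ioi (0 : ℝ), 0 ≤ f t := fun t ht => f_nonneg (le_of_lt ht)
  refine ⟨hfnn, hI, setIntegral_nonneg measurableSet_Ioi hfnn, ?_⟩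
  have hc1 : c ≤ 1 := by linarith
  -- splitting
  have hsplit2 : Set.Ioc c 1 ∪ Set.Ioi (1 : ℝ) = Set.Ioi c := Set.Ioc_union_Ioi_eq_Ioi hc1
  have hsplit1 : Set.Ioc 0 c ∪ Set.Ioi c = Set.Ioi (0 : ℝ) :=
    Set.Ioc_union_Ioi_eq_Ioi (le_of_lt hc0)
  have hIc : IntegrableOn f (Set.Ioc 0 c) := hI.mono_set (by rw [← hsplit1]; exact Set.subset_union_left)
  have hIc1 : IntegrableOn f (Set.Ioc c 1) := hI.mono_set (fun t ht => hc0.trans ht.1)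
  have hIc2 : IntegrableOn f (Set.Ioi (1 : ℝ)) := hI.mono_set (fun t ht => show (0:ℝ) < t from one_pos.trans ht)
  have hIcc : IntegrableOn f (Set.Ioi c) := hI.mono_set (fun t ht => hc0.trans ht)
  -- Bound on (0, c]
  have B1 : (∫ t in Set.Ioc 0 c, f t) ≤ c * c := by
    have hconst : (∫ t in Set.Ioc 0 c, c) = c * c := by
      rw [setIntegral_const, measureReal_def, Real.volume_Ioc, smul_eq_mul]
      rw [ENNReal.toReal_ofReal (by linarith)]
      ring
    rw [← hconst]
    refine setIntegral_mono_on hIc (integrableOn_const ?_) measurableSet_Ioc ?_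
    · rw [Real.volume_Ioc]; exact ENNReal.ofReal_lt_top.ne
    · intro t ht
      simp only [hf]
      have := f_le_exp' hc0 ht.1.le
      have he : Real.exp (-t) ≤ 1 := Real.exp_le_one_iff.2 (by linarith [ht.1])
      nlinarith [hc0]
  -- Bound on (c, 1]
  have B2 : (∫ t in Set.Ioc c 1, f t) ≤ c ^ 2 * |Real.log c| := by
    have hgint : IntegrableOn (fun t => c ^ 2 / 2 * (1 / t)) (Set.Ioc c 1) := by
      apply IntegrableOn.mono_set (t := Set.Icc c 1) ?_ Set.Ioc_subset_Icc_self
      apply ContinuousOn.integrableOn_Icc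
      apply ContinuousOn.mul continuousOn_const
      apply ContinuousOn.div continuousOn_const continuousOn_id
      intro x hx; exact (hc0.trans_le hx.1).ne'
    have hmono : (∫ t in Set.Ioc c 1, f t) ≤ ∫ t in Set.Ioc c 1, c ^ 2 / 2 * (1 / t) := by
      refine setIntegral_mono_on hIc1 hgint measurableSet_Ioc ?_
      intro t ht
      simp only [hf]
      have ht0 : 0 < t := hc0.trans ht.1
      have h1 := f_le_inv hc0 ht0
      have h2 : 2 * t ≤ Real.exp (2 * t) - 1 := by
        have := Real.add_one_le_exp (2 * t); linarith
      have h3 : c ^ 2 / (Real.exp (2 * t) - 1) ≤ c ^ 2 / (2 * t) :=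
        div_le_div_of_nonneg_left (sq_nonneg c) (by linarith) h2
      have h4 : c ^ 2 / (2 * t) = c ^ 2 / 2 * (1 / t) := by ring
      linarith [h4 ▸ h3]
    have hval : (∫ t in Set.Ioc c 1, c ^ 2 / 2 * (1 / t)) = c ^ 2 / 2 * (-Real.log c) := by
      rw [← intervalIntegral.integral_of_le hc1, intervalIntegral.integral_const_mul,
        integral_one_div (by
          intro h
          rcases Set.mem_uIcc.1 h with h' | h' <;> linarith [h'.1, h'.2])]
      rw [Real.log_div one_ne_zero hc0.ne', Real.log_one]
      ring
    have habs : |Real.log c| = -Real.log c :=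
      abs_of_neg (Real.log_neg hc0 (by linarith))
    rw [habs]
    calc (∫ t in Set.Ioc c 1, f t) ≤ c ^ 2 / 2 * (-Real.log c) := hval ▸ hmono
      _ ≤ c ^ 2 * (-Real.log c) := by
          have : 0 ≤ -Real.log c := by
            have := Real.log_neg hc0 (by linarith : c < 1); linarith
          nlinarith [sq_nonneg c]
  -- Bound on (1, ∞)
  have B3 : (∫ t in Set.Ioi (1 : ℝ), f t) ≤ c ^ 2 := by
    have hgint : IntegrableOn (fun t => c ^ 2 * Real.exp (-t)) (Set.Ioi (1 : ℝ)) := by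
      have := (exp_neg_integrableOn_Ioi (1 : ℝ) (b := 1) one_pos).const_mul (c ^ 2)
      simpa [IntegrableOn] using this
    have hmono : (∫ t in Set.Ioi (1 : ℝ), f t) ≤ ∫ t in Set.Ioi (1 : ℝ), c ^ 2 * Real.exp (-t) := by
      refine setIntegral_mono_on hIc2 hgint measurableSet_Ioi ?_
      intro t ht
      simp only [hf]
      have ht1 : (1 : ℝ) < t := ht
      have h1 := f_le_inv hc0 (by linarith : (0:ℝ) < t)
      have he1 : (2 : ℝ) ≤ Real.exp t := by
        have := Real.add_one_le_exp (1 : ℝ)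
        have := Real.exp_le_exp.2 ht1.le
        linarith
      have hent : Real.exp (-t) ≤ 1 := Real.exp_le_one_iff.2 (by linarith)
      have hexp2 : Real.exp (2 * t) = Real.exp t * Real.exp t := by
        rw [← Real.exp_add]; ring_nf
      have hkey : Real.exp t ≤ Real.exp (2 * t) - 1 := by
        rw [hexp2]; nlinarith [Real.exp_pos t]
      have h3 : c ^ 2 / (Real.exp (2 * t) - 1) ≤ c ^ 2 / Real.exp t :=
        div_le_div_of_nonneg_left (sq_nonneg c) (Real.exp_pos t) hkey
      have h4 : c ^ 2 / Real.exp t = c ^ 2 * Real.exp (-t) := by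
        rw [Real.exp_neg]; ring
      linarith [h4 ▸ h3]
    have hval : (∫ t in Set.Ioi (1 : ℝ), c ^ 2 * Real.exp (-t)) = c ^ 2 * Real.exp (-1) := by
      rw [integral_const_mul, integral_exp_neg_Ioi]
    have he : Real.exp (-1 : ℝ) ≤ 1 := Real.exp_le_one_iff.2 (by norm_num)
    calc (∫ t in Set.Ioi (1 : ℝ), f t) ≤ c ^ 2 * Real.exp (-1) := hval ▸ hmono
      _ ≤ c ^ 2 := by nlinarith [sq_nonneg c]
  -- combine
  have hdisj2 : Disjoint (Set.Ioc c 1) (Set.Ioi (1 : ℝ)) := Set.Ioc_disjoint_Ioi le_rfl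
  have hdisj1 : Disjoint (Set.Ioc 0 c) (Set.Ioi c) := Set.Ioc_disjoint_Ioi le_rfl
  have hsum2 : (∫ t in Set.Ioi c, f t) =
      (∫ t in Set.Ioc c 1, f t) + ∫ t in Set.Ioi (1 : ℝ), f t := by
    rw [← hsplit2] at hIcc ⊢
    exact setIntegral_union hdisj2 measurableSet_Ioi hIc1 hIc2
  have hsum1 : (∫ t in Set.Ioi (0 : ℝ), f t) =
      (∫ t in Set.Ioc 0 c, f t) + ∫ t in Set.Ioi c, f t := by
    rw [← hsplit1]
    exact setIntegral_union hdisj1 measurableSet_Ioi hIc hIcc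
  have hlogabs : 0 ≤ |Real.log c| := abs_nonneg _
  calc (∫ t in Set.Ioi (0 : ℝ), f t)
      = (∫ t in Set.Ioc 0 c, f t) + ((∫ t in Set.Ioc c 1, f t) + ∫ t in Set.Ioi (1 : ℝ), f t) := by
        rw [hsum1, hsum2]
    _ ≤ c * c + (c ^ 2 * |Real.log c| + c ^ 2) := by linarith
    _ ≤ 2 * c ^ 2 * (1 + |Real.log c|) := by nlinarith [sq_nonneg c, hc0.le]
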